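/- The total mass of the stationary profile is ∫_{-∞}^{V_F} ρ(v) dv = N · K((V_R−V_0)/√a, (V_F−V_0)/√a), where K(w_R,w_F) := ∫_0^∞ (e^{-s²/2}/s)(e^{s·w_F} − e^{s·w_R}) ds. Consequently, ∫_{-∞}^{V_F} ρ(v) dv + τN = 1 holds if and only if N·(τ + K((V_R−V_0)/√a, (V_F−V_0)/√a)) = 1. -/

import Mathlib

/-- K(w_R, w_F) := ∫_0^∞ (e^{-s²/2}/s)(e^{s·w_F} − e^{s·w_R}) ds (Lebesgue integral on (0,∞)). -/
noncomputable def K (wR wF : ℝ) : ℝ :=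
  ∫ s in Set.Ioi (0 : ℝ), Real.exp (-s ^ 2 / 2) / s * (Real.exp (s * wF) - Real.exp (s * wR))

/-- The stationary profile
ρ(v) := (N/a) e^{-(v−V_0)²/(2a)} ∫_{max(v,V_R)}^{V_F} e^{(w−V_0)²/(2a)} dw. -/
noncomputable def statProfile (N a V0 VR VF : ℝ) (v : ℝ) : ℝ :=
  N / a * Real.exp (-(v - V0) ^ 2 / (2 * a)) *
    ∫ w in (max v VR)..VF, Real.exp ((w - V0) ^ 2 / (2 * a))

open MeasureTheory Set Real
/-- Reflection: integral over (-∞, w) equals integral over (0,∞) of reflected function. -/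
lemma integral_Iio_reflect (g : ℝ → ℝ) (w : ℝ) :
    ∫ v in Iio w, g v = ∫ u in Ioi (0:ℝ), g (w - u) := by
  have hmp : MeasurePreserving (fun u : ℝ => w - u) volume volume := by
    have := (measurePreserving_add_left (volume : Measure ℝ) w).comp
      (Measure.measurePreserving_neg volume)
    simpa [Function.comp_def, sub_eq_add_neg] using this
  have hemb : MeasurableEmbedding (fun u : ℝ => w - u) := by
    have h := ((Homeomorph.neg ℝ).trans (Homeomorph.addLeft w)).measurableEmbedding
    have : ⇑((Homeomorph.neg ℝ).trans (Homeomorph.addLeft w)) = fun u : ℝ => w - u := by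
      funext u; simp [sub_eq_add_neg]
    rwa [this] at h
  have hpre : (fun u : ℝ => w - u) ⁻¹' (Iio w) = Ioi 0 := by
    ext u; simp
  rw [← hmp.setIntegral_preimage_emb hemb g (Iio w), hpre]

/-- Integrability of Gaussians with linear term. -/
lemma integrable_exp_quad {a : ℝ} (ha : 0 < a) (c : ℝ) :
    Integrable (fun u : ℝ => exp (-u ^ 2 / (2 * a) + c * u)) := by
  have hb : (0:ℝ) < 1 / (2 * a) := by positivity
  have h1 : Integrable (fun u : ℝ => exp (-(1 / (2 * a)) * (u - a * c) ^ 2)) :=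
    (integrable_exp_neg_mul_sq hb).comp_sub_right (a * c)
  have h2 := h1.const_mul (exp (a * c ^ 2 / 2))
  refine h2.congr (Filter.Eventually.of_forall fun u => ?_)
  show exp _ * exp _ = exp _
  rw [← exp_add]
  congr 1; field_simp; ring
open scoped ENNReal

lemma mass_eq (VR VF N a V0 : ℝ) (hV : VR < VF) (hN : 0 < N) (ha : 0 < a) :
    (∫ v in Set.Iic VF, statProfile N a V0 VR VF v) =
      N * K ((VR - V0) / Real.sqrt a) ((VF - V0) / Real.sqrt a) := by
  have h2a : (0:ℝ) < 2 * a := by linarith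
  have hsa : (0:ℝ) < Real.sqrt a := Real.sqrt_pos.mpr ha
  set g : ℝ → ℝ := fun v => exp (-(v - V0) ^ 2 / (2 * a)) with hg_def
  set G : ℝ → ℝ := fun w => exp ((w - V0) ^ 2 / (2 * a)) with hG_def
  set Q : ℝ → ℝ → ℝ := fun w u => exp (-u ^ 2 / (2 * a) + u * ((w - V0) / a)) with hQ_def
  set f : ℝ → ℝ := fun u => exp (-u ^ 2 / (2 * a)) * (a / u) *
      (exp (u * ((VF - V0) / a)) - exp (u * ((VR - V0) / a))) with hf_def
  have hgc : Continuous g := by fun_prop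
  have hGc : Continuous G := by fun_prop
  have hQc : Continuous fun p : ℝ × ℝ => Q p.1 p.2 := by fun_prop
  have hg_int : Integrable g := by
    have hb : (0:ℝ) < 1 / (2 * a) := by positivity
    refine ((integrable_exp_neg_mul_sq hb).comp_sub_right V0).congr
      (Filter.Eventually.of_forall fun v => ?_)
    show exp _ = exp _
    congr 1; field_simp
  have hQ_int : ∀ w : ℝ, Integrable (Q w) := by
    intro w
    refine (integrable_exp_quad ha ((w - V0) / a)).congr
      (Filter.Eventually.of_forall fun u => ?_)
    show exp _ = exp _
    congr 1; ring
  -- continuity/measurability of statProfile on Iic VF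
  have hPc : Continuous fun x : ℝ => ∫ w in x..VF, G w := by
    have h1 : ∀ c d : ℝ, IntervalIntegrable G volume c d := fun c d =>
      hGc.intervalIntegrable c d
    have h2 := (intervalIntegral.continuous_primitive h1 VF).neg
    refine h2.congr fun x => ?_
    simp only [Pi.neg_apply]
    rw [← intervalIntegral.integral_symm]
  have hρc : Continuous (statProfile N a V0 VR VF) := by
    unfold statProfile
    exact (continuous_const.mul hgc).mul (hPc.comp (continuous_id.max continuous_const))
  -- nonnegativity of statProfile on Iic VF
  have hρ_nonneg : ∀ v ∈ Iic VF, 0 ≤ statProfile N a V0 VR VF v := by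
    intro v hv
    unfold statProfile
    have h1 : max v VR ≤ VF := max_le hv hV.le
    have h2 : 0 ≤ ∫ w in max v VR..VF, exp ((w - V0) ^ 2 / (2 * a)) :=
      intervalIntegral.integral_nonneg h1 fun u _ => (exp_pos _).le
    positivity
  -- Step 1: rewrite as iterated lintegral
  have step1 : (∫⁻ v in Iic VF, ENNReal.ofReal (statProfile N a V0 VR VF v)) =
      ENNReal.ofReal (N / a) * ∫⁻ v in Iic VF, ∫⁻ w in Ioc VR VF,
        ENNReal.ofReal (g v) * (Ioi v).indicator (fun w => ENNReal.ofReal (G w)) w := by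
    rw [← lintegral_const_mul' _ _ ENNReal.ofReal_ne_top]
    refine setLIntegral_congr_fun measurableSet_Iic
      (fun v hv => ?_)
    have hmax : max v VR ≤ VF := max_le hv hV.le
    have e1 : statProfile N a V0 VR VF v = N / a * (g v * ∫ w in Ioc (max v VR) VF, G w) := by
      unfold statProfile
      rw [intervalIntegral.integral_of_le hmax]
      ring
    have hsets : Ioi v ∩ Ioc VR VF = Ioc (max v VR) VF := by
      ext w
      simp only [mem_inter_iff, mem_Ioi, mem_Ioc, max_lt_iff]
      tauto
    rw [e1, ENNReal.ofReal_mul (by positivity), ENNReal.ofReal_mul (exp_pos _).le,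
      ofReal_integral_eq_lintegral_ofReal (hGc.integrableOn_Ioc)
        (Filter.Eventually.of_forall fun w => (exp_pos _).le)]
    congr 1
    rw [lintegral_const_mul' _ _ ENNReal.ofReal_ne_top]
    congr 1
    rw [lintegral_indicator measurableSet_Ioi, Measure.restrict_restrict measurableSet_Ioi,
      hsets]
  -- Step 2: swap the two integrals (Tonelli)
  have hswap1 : (∫⁻ v in Iic VF, ∫⁻ w in Ioc VR VF,
        ENNReal.ofReal (g v) * (Ioi v).indicator (fun w => ENNReal.ofReal (G w)) w) =
      ∫⁻ w in Ioc VR VF, ∫⁻ v in Iic VF,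
        ENNReal.ofReal (g v) * (Ioi v).indicator (fun w => ENNReal.ofReal (G w)) w := by
    refine lintegral_lintegral_swap ?_
    have hm : Measurable fun p : ℝ × ℝ =>
        ({q : ℝ × ℝ | q.1 < q.2}.indicator
          (fun q => ENNReal.ofReal (g q.1) * ENNReal.ofReal (G q.2)) p) := by
      refine Measurable.indicator ?_ (measurableSet_lt measurable_fst measurable_snd)
      exact (ENNReal.measurable_ofReal.comp (hgc.measurable.comp measurable_fst)).mul
        (ENNReal.measurable_ofReal.comp (hGc.measurable.comp measurable_snd))
    have hfun : (Function.uncurry fun v w =>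
        ENNReal.ofReal (g v) * (Ioi v).indicator (fun w => ENNReal.ofReal (G w)) w) =
        fun p : ℝ × ℝ => ({q : ℝ × ℝ | q.1 < q.2}.indicator
          (fun q => ENNReal.ofReal (g q.1) * ENNReal.ofReal (G q.2)) p) := by
      funext p
      by_cases h : p.1 < p.2 <;>
        simp [Function.uncurry, Set.indicator_apply, h, Set.mem_Ioi]
    rw [hfun]
    exact hm.aemeasurable
  -- Step 3: compute the inner v integral for w ∈ Ioc VR VF
  have step3 : (∫⁻ w in Ioc VR VF, ∫⁻ v in Iic VF,
        ENNReal.ofReal (g v) * (Ioi v).indicator (fun w => ENNReal.ofReal (G w)) w) =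
      ∫⁻ w in Ioc VR VF, ∫⁻ u in Ioi 0, ENNReal.ofReal (Q w u) := by
    refine setLIntegral_congr_fun measurableSet_Ioc
      (fun w hw => ?_)
    have hwF : w ≤ VF := hw.2
    have e1 : ∀ v : ℝ, ENNReal.ofReal (g v) *
        (Ioi v).indicator (fun w => ENNReal.ofReal (G w)) w =
        (Iio w).indicator (fun v => ENNReal.ofReal (g v * G w)) v := by
      intro v
      by_cases h : v < w <;>
        simp [Set.indicator_apply, h, Set.mem_Ioi, Set.mem_Iio, ENNReal.ofReal_mul (p := g v) (exp_pos _).le]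
    simp_rw [e1]
    have hsub : Iio w ∩ Iic VF = Iio w := Set.inter_eq_left.mpr fun x hx => le_trans hx.le hwF
    rw [lintegral_indicator measurableSet_Iio, Measure.restrict_restrict measurableSet_Iio, hsub]
    rw [← ofReal_integral_eq_lintegral_ofReal ((hg_int.mul_const (G w)).integrableOn)
      (Filter.Eventually.of_forall fun v => mul_nonneg (exp_pos _).le (exp_pos _).le)]
    rw [integral_Iio_reflect (fun v => g v * G w) w]
    have e2 : ∀ u : ℝ, g (w - u) * G w = Q w u := by
      intro u
      show exp _ * exp _ = exp _
      rw [← exp_add]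
      congr 1
      field_simp
      ring
    rw [setIntegral_congr_fun measurableSet_Ioi fun u _ => e2 u]
    rw [ofReal_integral_eq_lintegral_ofReal ((hQ_int w).integrableOn)
      (Filter.Eventually.of_forall fun u => (exp_pos _).le)]
  -- Step 4: swap again
  have hswap2 : (∫⁻ w in Ioc VR VF, ∫⁻ u in Ioi 0, ENNReal.ofReal (Q w u)) =
      ∫⁻ u in Ioi 0, ∫⁻ w in Ioc VR VF, ENNReal.ofReal (Q w u) := by
    refine lintegral_lintegral_swap ?_
    exact ((ENNReal.measurable_ofReal.comp hQc.measurable).aemeasurable)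
  -- Step 5: compute the inner w integral for u ∈ Ioi 0
  have step5 : (∫⁻ u in Ioi 0, ∫⁻ w in Ioc VR VF, ENNReal.ofReal (Q w u)) =
      ∫⁻ u in Ioi 0, ENNReal.ofReal (f u) := by
    refine setLIntegral_congr_fun measurableSet_Ioi
      (fun u hu => ?_)
    have hu0 : (0:ℝ) < u := hu
    have hQwc : Continuous fun w => Q w u := by fun_prop
    rw [← ofReal_integral_eq_lintegral_ofReal (hQwc.integrableOn_Ioc)
      (Filter.Eventually.of_forall fun w => (exp_pos _).le)]
    congr 1
    rw [← intervalIntegral.integral_of_le hV.le]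
    have e3 : ∀ w : ℝ, Q w u = exp (-u ^ 2 / (2 * a) - u * V0 / a) * exp (u / a * w) := by
      intro w
      rw [← exp_add]
      show exp _ = exp _
      congr 1
      field_simp
      ring
    simp_rw [e3]
    rw [intervalIntegral.integral_const_mul]
    rw [intervalIntegral.integral_comp_mul_left (fun x => exp x) (div_ne_zero hu0.ne' ha.ne')]
    rw [integral_exp]
    show _ * ((u/a)⁻¹ * _) = _
    simp only [hf_def]
    have hane : a ≠ 0 := ha.ne'
    have hune : u ≠ 0 := hu0.ne'
    rw [show -u ^ 2 / (2 * a) - u * V0 / a = -u ^ 2 / (2 * a) - u / a * V0 by ring,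
      show u * ((VF - V0) / a) = u / a * VF - u / a * V0 by ring,
      show u * ((VR - V0) / a) = u / a * VR - u / a * V0 by ring,
      Real.exp_sub, Real.exp_sub, Real.exp_sub]
    field_simp
  -- Step 6: nonnegativity and integrability of f on (0,∞)
  have hf0 : ∀ u ∈ Ioi (0:ℝ), 0 ≤ f u := by
    intro u hu
    have hu0 : (0:ℝ) < u := hu
    have hle : exp (u * ((VR - V0) / a)) ≤ exp (u * ((VF - V0) / a)) := by
      apply exp_le_exp.mpr
      have : (VR - V0) / a ≤ (VF - V0) / a := by gcongr <;> linarith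
      exact mul_le_mul_of_nonneg_left this hu0.le
    have h1 : 0 ≤ a / u := by positivity
    have h2 : 0 ≤ exp (-u ^ 2 / (2 * a)) := (exp_pos _).le
    simp only [hf_def]
    exact mul_nonneg (mul_nonneg h2 h1) (sub_nonneg.mpr hle)
  have hf_meas : AEStronglyMeasurable f (volume.restrict (Ioi 0)) := by
    apply Measurable.aestronglyMeasurable
    fun_prop
  have hf_int : IntegrableOn f (Ioi 0) := by
    set cF : ℝ := (VF - V0) / a with hcF
    set cR : ℝ := (VR - V0) / a with hcR
    have hbound : Integrable (fun u : ℝ => a * (cF - cR) * exp (-u ^ 2 / (2 * a) + cF * u)) :=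
      (integrable_exp_quad ha cF).const_mul _
    refine Integrable.mono' hbound.integrableOn hf_meas ?_
    rw [ae_restrict_iff' measurableSet_Ioi]
    filter_upwards with u hu
    have hu0 : (0:ℝ) < u := hu
    rw [Real.norm_eq_abs, abs_of_nonneg (hf0 u hu)]
    have e : a * (cF - cR) * exp (-u ^ 2 / (2 * a) + cF * u) =
        exp (-u ^ 2 / (2 * a)) * (a / u) * ((u * cF - u * cR) * exp (u * cF)) := by
      rw [exp_add]; field_simp
    rw [e]
    simp only [hf_def]
    have hsplit : exp (u * cR) = exp (u * cF) * exp (u * cR - u * cF) := by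
      rw [← exp_add]; ring_nf
    gcongr
    nlinarith [Real.add_one_le_exp (u * cR - u * cF), Real.exp_pos (u * cF), hsplit]
  -- Step 7: substitution u = √a · s
  have hf_toK : (∫ u in Ioi (0:ℝ), f u) =
      a * K ((VR - V0) / Real.sqrt a) ((VF - V0) / Real.sqrt a) := by
    have hsub := integral_comp_mul_left_Ioi f 0 hsa
    simp only [mul_zero, smul_eq_mul] at hsub
    have hpt : ∀ s ∈ Ioi (0:ℝ), f (Real.sqrt a * s) =
        Real.sqrt a * (exp (-s ^ 2 / 2) / s *
          (exp (s * ((VF - V0) / Real.sqrt a)) - exp (s * ((VR - V0) / Real.sqrt a)))) := by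
      intro s hs
      have hs0 : (0:ℝ) < s := hs
      have haa : Real.sqrt a * Real.sqrt a = a := Real.mul_self_sqrt ha.le
      have h1 : -(Real.sqrt a * s) ^ 2 / (2 * a) = -s ^ 2 / 2 := by
        rw [mul_pow, Real.sq_sqrt ha.le]; field_simp
      have hsane : Real.sqrt a ≠ 0 := hsa.ne'
      have h2 : Real.sqrt a * s * ((VF - V0) / a) = s * ((VF - V0) / Real.sqrt a) := by
        field_simp
        linear_combination (VF - V0) * haa
      have h3 : Real.sqrt a * s * ((VR - V0) / a) = s * ((VR - V0) / Real.sqrt a) := by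
        field_simp
        linear_combination (VR - V0) * haa
      have h4 : a / (Real.sqrt a * s) = Real.sqrt a / s := by
        rw [div_eq_div_iff (mul_pos hsa hs0).ne' hs0.ne']
        linear_combination (-s) * haa
      simp only [hf_def]
      rw [h1, h2, h3, h4]
      ring
    rw [setIntegral_congr_fun measurableSet_Ioi hpt, integral_const_mul] at hsub
    unfold K
    have hsane : Real.sqrt a ≠ 0 := hsa.ne'
    have haa : Real.sqrt a * Real.sqrt a = a := Real.mul_self_sqrt ha.le
    rw [eq_inv_mul_iff_mul_eq₀ hsane] at hsub
    rw [← hsub]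
    linear_combination (∫ s in Ioi (0:ℝ), exp (-s ^ 2 / 2) / s *
      (exp (s * ((VF - V0) / Real.sqrt a)) - exp (s * ((VR - V0) / Real.sqrt a)))) * haa
  -- Final assembly
  have hKint_nonneg : 0 ≤ ∫ u in Ioi (0:ℝ), f u :=
    setIntegral_nonneg measurableSet_Ioi hf0
  calc (∫ v in Set.Iic VF, statProfile N a V0 VR VF v)
      = (∫⁻ v in Iic VF, ENNReal.ofReal (statProfile N a V0 VR VF v)).toReal :=
        integral_eq_lintegral_of_nonneg_ae
          ((ae_restrict_iff' measurableSet_Iic).2 (Filter.Eventually.of_forall hρ_nonneg))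
          hρc.aestronglyMeasurable.restrict
    _ = (ENNReal.ofReal (N / a) * ∫⁻ u in Ioi 0, ENNReal.ofReal (f u)).toReal := by
        rw [step1, hswap1, step3, hswap2, step5]
    _ = (ENNReal.ofReal (N / a) * ENNReal.ofReal (∫ u in Ioi (0:ℝ), f u)).toReal := by
        rw [ofReal_integral_eq_lintegral_ofReal hf_int
          ((ae_restrict_iff' measurableSet_Ioi).2 (Filter.Eventually.of_forall hf0))]
    _ = N / a * ∫ u in Ioi (0:ℝ), f u := by
        rw [← ENNReal.ofReal_mul (by positivity), ENNReal.toReal_ofReal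
          (mul_nonneg (by positivity) hKint_nonneg)]
    _ = N * K ((VR - V0) / Real.sqrt a) ((VF - V0) / Real.sqrt a) := by
        rw [hf_toK]; field_simp

/- STATEMENT 3: The total mass of the stationary profile is
∫_{-∞}^{V_F} ρ(v) dv = N · K((V_R−V_0)/√a, (V_F−V_0)/√a).  Consequently,
∫_{-∞}^{V_F} ρ(v) dv + τN = 1 holds iff N·(τ + K((V_R−V_0)/√a, (V_F−V_0)/√a)) = 1. -/
theorem statProfile_mass (VR VF N a τ V0 : ℝ) (hV : VR < VF) (hN : 0 < N) (ha : 0 < a)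
    (hτ : 0 < τ) :
    (∫ v in Set.Iic VF, statProfile N a V0 VR VF v) =
      N * K ((VR - V0) / Real.sqrt a) ((VF - V0) / Real.sqrt a) ∧
    ((∫ v in Set.Iic VF, statProfile N a V0 VR VF v) + τ * N = 1 ↔
      N * (τ + K ((VR - V0) / Real.sqrt a) ((VF - V0) / Real.sqrt a)) = 1) := by
  have key := mass_eq VR VF N a V0 hV hN ha
  refine ⟨key, ?_⟩
  rw [key, mul_add]
  constructor <;> intro h <;> linarith
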